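/- (Theorem 5.2, Eq. (54): first moment.) For every j ∈ {1,2} and every t > 0, v_jt·e^{−ξt}/(1 + λt) + ∫_{ℝ} x·p̃(x,t|v_j) dx = E_j(t), i.e. the mean position of the reset telegraph process at time t, started at 0 with velocity v_j, equals (1 − e^{−ξt})·( (v₁+v₂)/(2ξ) + (v_j − v_{j'})/(2λ) ) − (ξe^{ξ/λ}(v_j − v_{j'})/(2λ²))·Γ(0, ξ/λ, (ξ/λ)(1+λt)) + t·e^{−ξt}(v_j − v_{j'})/(2(1+λt)), where j' = 3 − j. -/

import Mathlib

open MeasureTheory Real Filter Topology Set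

noncomputable section

namespace TelegraphReset

open Classical in
/-- Real-valued indicator of a proposition. -/
def ind (P : Prop) : ℝ := if P then 1 else 0

/-- Generalized incomplete gamma function `Γ(0, z₀, z₁) = ∫_{z₀}^{z₁} u⁻¹ e^{-u} du`. -/
def iGamma (z₀ z₁ : ℝ) : ℝ := ∫ u in z₀..z₁, u⁻¹ * Real.exp (-u)

/-- Upper incomplete gamma function `Γ(0, a) = ∫_a^∞ u⁻¹ e^{-u} du`. -/
def uGamma (a : ℝ) : ℝ := ∫ u in Set.Ioi a, u⁻¹ * Real.exp (-u)

/-- `τ(x,t) = (x - v₂ t)/(v₁ - v₂)`. -/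
def tauF (v₁ v₂ x t : ℝ) : ℝ := (x - v₂ * t) / (v₁ - v₂)

/-- The two velocities, indexed by `1` and `2`. -/
def vel (v₁ v₂ : ℝ) : ℕ → ℝ := fun n => if n = 1 then v₁ else v₂

/-- `Γ_λ^ξ(x,t)`, defined piecewise according to the sign of `v₂`. -/
def GamL (v₁ v₂ lam xi x t : ℝ) : ℝ :=
  if v₂ < 0 then iGamma ((max (x / v₁) (x / v₂) + 1 / lam) * xi) ((t + 1 / lam) * xi)
  else iGamma ((x / v₁ + 1 / lam) * xi) ((min (x / v₂) t + 1 / lam) * xi)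

/-- `Θ_λ^ξ(x,t)`, defined piecewise according to the sign of `v₂`. -/
def Theta (v₁ v₂ lam xi x t : ℝ) : ℝ :=
  if v₂ < 0 then
    Real.exp (-(xi * max (x / v₁) (x / v₂))) / (1 + lam * max (x / v₁) (x / v₂))
      - Real.exp (-(xi * t)) / (1 + lam * t)
  else
    Real.exp (-(xi * (x / v₁))) / (1 + lam * (x / v₁))
      - Real.exp (-(xi * min (x / v₂) t)) / (1 + lam * min (x / v₂) t)

/-- Closed-form sub-density `P_{j,j}(x,t)` (Eq. (21)). -/
def Pss (v₁ v₂ lam xi : ℝ) (j : ℕ) (x t : ℝ) : ℝ :=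
  ind (v₂ * t < x ∧ x < v₁ * t) * Real.exp (-(xi * t)) * lam ^ 2 *
      tauF v₁ v₂ x t ^ (2 - j) * (t - tauF v₁ v₂ x t) ^ (j - 1) /
      ((v₁ - v₂) * (1 + lam * t) ^ 2)
  + Real.sign (vel v₁ v₂ j) * ind (0 < x / vel v₁ v₂ j ∧ x / vel v₁ v₂ j < t) * xi *
      Real.exp (-(xi * (x / vel v₁ v₂ j))) / (vel v₁ v₂ j + lam * x)
  + ind (min (v₂ * t) 0 < x ∧ x < v₁ * t) *
      ((-1 : ℝ) ^ (3 - j) * (xi * (vel v₁ v₂ (3 - j) + lam * x) / (v₁ - v₂) ^ 2) *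
          Theta v₁ v₂ lam xi x t
        + (-1 : ℝ) ^ j * (xi * Real.exp (xi / lam) / (v₁ - v₂) ^ 2) *
            (vel v₁ v₂ (3 - j) * (lam + xi) / lam + x * xi) * GamL v₁ v₂ lam xi x t)

/-- Closed-form sub-density `P_{3-j,j}(x,t)` (Eq. (22)). -/
def Pos (v₁ v₂ lam xi : ℝ) (j : ℕ) (x t : ℝ) : ℝ :=
  ind (v₂ * t < x ∧ x < v₁ * t) * Real.exp (-(xi * t)) * lam *
      (1 + lam * tauF v₁ v₂ x t ^ (j - 1) * (t - tauF v₁ v₂ x t) ^ (2 - j)) /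
      ((v₁ - v₂) * (1 + lam * t) ^ 2)
  + ind (min (v₂ * t) 0 < x ∧ x < v₁ * t) *
      ((-1 : ℝ) ^ j * (xi * (vel v₁ v₂ (3 - j) + lam * x) / (v₁ - v₂) ^ 2) *
          Theta v₁ v₂ lam xi x t
        + (-1 : ℝ) ^ (3 - j) * (xi * Real.exp (xi / lam) / (v₁ - v₂) ^ 2) *
            (vel v₁ v₂ j * (lam + xi) / lam + x * xi
              + (-1 : ℝ) ^ j * xi * (v₁ - v₂) / lam) * GamL v₁ v₂ lam xi x t)

/-- Closed-form reset density `p̃(x,t|v_j)` (Eq. (37)). -/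
def pTil (v₁ v₂ lam xi : ℝ) (j : ℕ) (x t : ℝ) : ℝ :=
  Real.sign (vel v₁ v₂ j) * ind (0 < x / vel v₁ v₂ j ∧ x / vel v₁ v₂ j < t) * xi *
      Real.exp (-(xi * (x / vel v₁ v₂ j))) / (vel v₁ v₂ j + lam * x)
  + ind (v₂ * t < x ∧ x < v₁ * t) * lam * Real.exp (-(xi * t)) /
      ((v₁ - v₂) * (1 + lam * t))
  + ind (min (v₂ * t) 0 < x ∧ x < v₁ * t) *
      (xi * Real.exp (xi / lam) / (v₁ - v₂)) * GamL v₁ v₂ lam xi x t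

/-- First moment `E_j[X̃(t)]` (Eq. (54)). -/
def Emom (v₁ v₂ lam xi : ℝ) (j : ℕ) (t : ℝ) : ℝ :=
  (1 - Real.exp (-(xi * t))) *
      ((v₁ + v₂) / (2 * xi) + (vel v₁ v₂ j - vel v₁ v₂ (3 - j)) / (2 * lam))
  - xi * Real.exp (xi / lam) * (vel v₁ v₂ j - vel v₁ v₂ (3 - j)) / (2 * lam ^ 2) *
      iGamma (xi / lam) (xi / lam * (1 + lam * t))
  + t * Real.exp (-(xi * t)) * (vel v₁ v₂ j - vel v₁ v₂ (3 - j)) / (2 * (1 + lam * t))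

/-- Second moment `E_j[X̃²(t)]` (Eq. (55)). -/
def Smom (v₁ v₂ lam xi : ℝ) (j : ℕ) (t : ℝ) : ℝ :=
  (1 - Real.exp (-(xi * t))) *
      (2 * (v₁ ^ 2 + v₁ * v₂ + v₂ ^ 2) / (3 * xi ^ 2)
        + (2 * vel v₁ v₂ j ^ 2 - v₁ * v₂ - vel v₁ v₂ (3 - j) ^ 2) / (3 * lam) *
            (1 / xi - 1 / lam))
  - t * Real.exp (-(xi * t)) *
      (2 * (v₁ ^ 2 + v₁ * v₂ + v₂ ^ 2) / (3 * xi)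
        + (2 * vel v₁ v₂ j ^ 2 - v₁ * v₂ - vel v₁ v₂ (3 - j) ^ 2) /
            (3 * lam * (1 + lam * t)))
  + xi * Real.exp (xi / lam) *
      (2 * vel v₁ v₂ j ^ 2 - v₁ * v₂ - vel v₁ v₂ (3 - j) ^ 2) / (3 * lam ^ 3) *
      iGamma (xi / lam) (xi / lam * (1 + lam * t))

/-- First moment of the reset-free process. -/
def m1 (v₁ v₂ lam : ℝ) (j : ℕ) (t : ℝ) : ℝ :=
  (v₁ + v₂) * t / 2 + (vel v₁ v₂ j - vel v₁ v₂ (3 - j)) * t / (2 * (1 + lam * t))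

/-- Second moment of the reset-free process (Eq. (63)). -/
def m2 (v₁ v₂ lam : ℝ) (j : ℕ) (t : ℝ) : ℝ :=
  t ^ 2 * (3 * vel v₁ v₂ j ^ 2 + lam * t * (v₁ ^ 2 + v₁ * v₂ + v₂ ^ 2)) /
    (3 * (1 + lam * t))



section Helpers

def hfn (u : ℝ) : ℝ := u⁻¹ * Real.exp (-u)

lemma hfn_meas : Measurable hfn :=
  measurable_inv.mul (Real.continuous_exp.comp continuous_neg).measurable

lemma hfn_contAt {a : ℝ} (ha : a ≠ 0) : ContinuousAt hfn a :=
  (continuousAt_inv₀ ha).mul ((Real.continuous_exp.comp continuous_neg).continuousAt)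

lemma hfn_intInt {a b : ℝ} (ha : 0 < a) (hb : 0 < b) :
    IntervalIntegrable hfn volume a b := by
  apply ContinuousOn.intervalIntegrable
  intro u hu
  have hu0 : 0 < u := lt_of_lt_of_le (lt_min ha hb) hu.1
  exact (hfn_contAt hu0.ne').continuousWithinAt

lemma iGamma_eq (a b : ℝ) : iGamma a b = ∫ u in a..b, hfn u := rfl

lemma iGamma_same (a : ℝ) : iGamma a a = 0 := intervalIntegral.integral_same

lemma hasDerivAt_iGamma_right (c : ℝ) {a : ℝ} (hc : 0 < c) (ha : 0 < a) :
    HasDerivAt (fun b => iGamma c b) (a⁻¹ * Real.exp (-a)) a := by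
  have := intervalIntegral.integral_hasDerivAt_right (hfn_intInt hc ha)
    (hfn_meas.stronglyMeasurable.stronglyMeasurableAtFilter) (hfn_contAt ha.ne')
  simpa [iGamma_eq, hfn] using this

lemma hasDerivAt_iGamma_left (c : ℝ) {a : ℝ} (hc : 0 < c) (ha : 0 < a) :
    HasDerivAt (fun b => iGamma b c) (-(a⁻¹ * Real.exp (-a))) a := by
  have := intervalIntegral.integral_hasDerivAt_left (hfn_intInt ha hc)
    (hfn_meas.stronglyMeasurable.stronglyMeasurableAtFilter) (hfn_contAt ha.ne')
  simpa [iGamma_eq, hfn] using this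

lemma iGamma_split {a b c : ℝ} (ha : 0 < a) (hb : 0 < b) (hc : 0 < c) :
    iGamma a b = iGamma a c - iGamma b c := by
  have h := intervalIntegral.integral_add_adjacent_intervals
    (hfn_intInt ha hb) (hfn_intInt hb hc)
  simp only [iGamma_eq] at *
  linarith

lemma continuousAt_iGamma_left (c : ℝ) {a : ℝ} (hc : 0 < c) (ha : 0 < a) :
    ContinuousAt (fun b => iGamma b c) a :=
  (hasDerivAt_iGamma_left c hc ha).continuousAt

variable {v₁ v₂ lam xi t : ℝ}

lemma K_int (hlam : 0 < lam) (hxi : 0 < xi) (ht : 0 < t) :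
    ∫ s in (0:ℝ)..t, xi * s * Real.exp (-(xi * s)) / (1 + lam * s)
      = (1 - Real.exp (-(xi * t))) / lam
        - xi * Real.exp (xi / lam) / lam ^ 2 * iGamma (xi / lam) (xi / lam * (1 + lam * t)) := by
  set F : ℝ → ℝ := fun s => -Real.exp (-(xi * s)) / lam
    - xi * Real.exp (xi / lam) / lam ^ 2 * iGamma (xi / lam) (xi / lam * (1 + lam * s)) with hF
  have key : ∀ s ∈ Set.uIcc (0:ℝ) t,
      HasDerivAt F (xi * s * Real.exp (-(xi * s)) / (1 + lam * s)) s := by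
    intro s hs
    rw [Set.uIcc_of_le ht.le] at hs
    have hs0 : 0 ≤ s := hs.1
    have hds : 0 < 1 + lam * s := by nlinarith
    have ha : 0 < xi / lam * (1 + lam * s) := by positivity
    have h1 : HasDerivAt (fun s : ℝ => -Real.exp (-(xi * s)) / lam)
        (xi * Real.exp (-(xi * s)) / lam) s := by
      have : HasDerivAt (fun s : ℝ => Real.exp (-(xi * s))) (Real.exp (-(xi * s)) * (-xi)) s :=
        (Real.hasDerivAt_exp _).comp s (by simpa using ((hasDerivAt_id s).const_mul (-xi)))
      refine (this.neg.div_const lam).congr_deriv ?_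
      ring
    have h2inner : HasDerivAt (fun s : ℝ => xi / lam * (1 + lam * s)) (xi / lam * lam) s := by
      simpa using (((hasDerivAt_id s).const_mul lam).const_add 1).const_mul (xi / lam)
    have h2 : HasDerivAt (fun s : ℝ => iGamma (xi / lam) (xi / lam * (1 + lam * s)))
        ((xi / lam * (1 + lam * s))⁻¹ * Real.exp (-(xi / lam * (1 + lam * s))) * (xi / lam * lam))
        s := by
      exact (hasDerivAt_iGamma_right (xi/lam) (by positivity) ha).comp s h2inner
    have := h1.sub ((h2.const_mul (xi * Real.exp (xi / lam) / lam ^ 2)))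
    refine this.congr_deriv ?_
    have hexp : Real.exp (-(xi / lam * (1 + lam * s)))
        = Real.exp (-(xi/lam)) * Real.exp (-(xi * s)) := by
      rw [← Real.exp_add]; congr 1; field_simp; ring
    rw [hexp, Real.exp_neg (xi / lam)]
    set E := Real.exp (xi / lam) with hE
    set e := Real.exp (-(xi * s)) with he
    have hE0 : E ≠ 0 := (Real.exp_pos _).ne'
    field_simp
    ring
  have hcont : IntervalIntegrable (fun s => xi * s * Real.exp (-(xi * s)) / (1 + lam * s))
      volume 0 t := by
    apply ContinuousOn.intervalIntegrable
    intro s hs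
    rw [Set.uIcc_of_le ht.le] at hs
    have hds : (1 + lam * s) ≠ 0 := by nlinarith [hs.1]
    exact ContinuousWithinAt.div
      (((continuous_const.mul continuous_id).mul
        (Real.continuous_exp.comp (continuous_const.mul continuous_id).neg)).continuousWithinAt)
      ((continuous_const.add (continuous_const.mul continuous_id)).continuousWithinAt) hds
  rw [intervalIntegral.integral_eq_sub_of_hasDerivAt key hcont]
  simp only [hF]
  rw [show xi / lam * (1 + lam * 0) = xi / lam by ring, iGamma_same]
  simp only [mul_zero, neg_zero, Real.exp_zero]
  ring

lemma J_int (hlam : 0 < lam) (hxi : 0 < xi) (ht : 0 < t) :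
    ∫ s in (0:ℝ)..t, s * iGamma ((s + 1 / lam) * xi) ((t + 1 / lam) * xi)
      = Real.exp (-(xi / lam)) / 2 *
          (Real.exp (-(xi * t)) * (-(t / xi) - 1 / xi ^ 2 + 1 / (lam * xi))
            + (1 / xi ^ 2 - 1 / (lam * xi)))
        + iGamma (xi / lam) (xi / lam * (1 + lam * t)) / (2 * lam ^ 2) := by
  have hT : 0 < (t + 1 / lam) * xi := by positivity
  set T := (t + 1 / lam) * xi with hTdef
  set H : ℝ → ℝ := fun s => s ^ 2 / 2 * iGamma ((s + 1 / lam) * xi) T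
    + Real.exp (-(xi / lam)) / 2 * (Real.exp (-(xi * s)) * (-(s / xi) - 1 / xi ^ 2 + 1 / (lam * xi)))
    + iGamma (xi / lam) ((s + 1 / lam) * xi) / (2 * lam ^ 2) with hH
  have key : ∀ s ∈ Set.uIcc (0:ℝ) t,
      HasDerivAt H (s * iGamma ((s + 1 / lam) * xi) T) s := by
    intro s hs
    rw [Set.uIcc_of_le ht.le] at hs
    have hs0 : 0 ≤ s := hs.1
    have ha : 0 < (s + 1 / lam) * xi := by positivity
    set a := (s + 1 / lam) * xi with hadef
    have hinner : HasDerivAt (fun s : ℝ => (s + 1 / lam) * xi) xi s := by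
      simpa using ((hasDerivAt_id s).add_const (1 / lam)).mul_const xi
    -- d1
    have hsq : HasDerivAt (fun s : ℝ => s ^ 2 / 2) s s := by
      simpa using ((hasDerivAt_pow 2 s).div_const 2)
    have hG1 : HasDerivAt (fun s : ℝ => iGamma ((s + 1 / lam) * xi) T)
        (-(a⁻¹ * Real.exp (-a)) * xi) s :=
      HasDerivAt.comp (hh₂ := hasDerivAt_iGamma_left T hT ha) s hinner
    have d1 : HasDerivAt (fun s : ℝ => s ^ 2 / 2 * iGamma ((s + 1 / lam) * xi) T)
        (s * iGamma ((s + 1 / lam) * xi) T + s ^ 2 / 2 * (-(a⁻¹ * Real.exp (-a)) * xi)) s :=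
      hsq.mul hG1
    -- d2
    have hexp' : HasDerivAt (fun s : ℝ => Real.exp (-(xi * s)))
        (Real.exp (-(xi * s)) * (-xi)) s :=
      (Real.hasDerivAt_exp _).comp s (by simpa using ((hasDerivAt_id s).const_mul (-xi)))
    have hlin : HasDerivAt (fun s : ℝ => -(s / xi) - 1 / xi ^ 2 + 1 / (lam * xi)) (-(1 / xi)) s := by
      have h := ((((hasDerivAt_id s).div_const xi).neg).sub_const (1 / xi ^ 2)).add_const
        (1 / (lam * xi))
      exact h
    have d2 : HasDerivAt (fun s : ℝ => Real.exp (-(xi / lam)) / 2 *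
        (Real.exp (-(xi * s)) * (-(s / xi) - 1 / xi ^ 2 + 1 / (lam * xi))))
        (Real.exp (-(xi / lam)) / 2 *
          (Real.exp (-(xi * s)) * (-xi) * (-(s / xi) - 1 / xi ^ 2 + 1 / (lam * xi))
            + Real.exp (-(xi * s)) * (-(1 / xi)))) s :=
      (hexp'.mul hlin).const_mul _
    -- d3
    have d3 : HasDerivAt (fun s : ℝ => iGamma (xi / lam) ((s + 1 / lam) * xi) / (2 * lam ^ 2))
        (a⁻¹ * Real.exp (-a) * xi / (2 * lam ^ 2)) s :=
      (((hasDerivAt_iGamma_right (xi / lam) (by positivity) ha).comp s hinner)).div_const _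
    have total := (d1.add d2).add d3
    refine total.congr_deriv ?_
    have hexp2 : Real.exp (-a) = Real.exp (-(xi / lam)) * Real.exp (-(xi * s)) := by
      rw [← Real.exp_add]; congr 1; rw [hadef]; field_simp; ring
    rw [hexp2]
    set E := Real.exp (-(xi / lam)) with hE
    set e := Real.exp (-(xi * s)) with he
    have haden : a ≠ 0 := ha.ne'
    have hxs : s + 1 / lam ≠ 0 := by positivity
    rw [hadef]
    field_simp
    ring
  have hcont : IntervalIntegrable (fun s => s * iGamma ((s + 1 / lam) * xi) T) volume 0 t := by
    apply ContinuousOn.intervalIntegrable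
    intro s hs
    rw [Set.uIcc_of_le ht.le] at hs
    have hs0 : (0:ℝ) ≤ s := hs.1
    have ha : 0 < (s + 1 / lam) * xi := by positivity
    apply ContinuousWithinAt.mul continuousWithinAt_id
    have hin : ContinuousAt (fun s : ℝ => (s + 1 / lam) * xi) s := by fun_prop
    have h2 : ContinuousAt (fun s : ℝ => iGamma ((s + 1 / lam) * xi) T) s :=
      ContinuousAt.comp (x := s) (f := fun s : ℝ => (s + 1 / lam) * xi)
        (continuousAt_iGamma_left T hT ha) hin
    exact h2.continuousWithinAt
  rw [intervalIntegral.integral_eq_sub_of_hasDerivAt key hcont]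
  simp only [hH]
  rw [show ((t : ℝ) + 1 / lam) * xi = T from rfl, iGamma_same]
  rw [show ((0 : ℝ) + 1 / lam) * xi = xi / lam by field_simp; ring]
  rw [iGamma_same]
  rw [show xi / lam * (1 + lam * t) = T by rw [hTdef]; field_simp; ring]
  simp only [mul_zero, neg_zero, Real.exp_zero, zero_pow, zero_div, zero_mul]
  ring

lemma contOn_iGamma_comp {T : ℝ} (hT : 0 < T) {m : ℝ → ℝ} {A : Set ℝ}
    (hm : ContinuousOn m A) (hpos : ∀ x ∈ A, 0 < m x) :
    ContinuousOn (fun x => iGamma (m x) T) A := by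
  intro x hx
  exact ContinuousAt.comp_continuousWithinAt (x := x) (f := m)
    (continuousAt_iGamma_left T hT (hpos x hx)) (hm x hx)



/-- Term A -/
lemma termA (hlam : 0 < lam) (hxi : 0 < xi) (ht : 0 < t) {w : ℝ} (hw : w ≠ 0) :
    Integrable (fun x : ℝ => x * (Real.sign w * ind (0 < x / w ∧ x / w < t) * xi *
        Real.exp (-(xi * (x / w))) / (w + lam * x))) volume ∧
      ∫ x : ℝ, x * (Real.sign w * ind (0 < x / w ∧ x / w < t) * xi *
        Real.exp (-(xi * (x / w))) / (w + lam * x))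
      = w * ∫ s in (0:ℝ)..t, xi * s * Real.exp (-(xi * s)) / (1 + lam * s) := by
  rcases hw.lt_or_gt with hneg | hpos
  · -- w < 0
    set g : ℝ → ℝ := fun x => -(x * xi * Real.exp (-(xi * (x / w))) / (w + lam * x)) with hg
    have hset : (fun x : ℝ => x * (Real.sign w * ind (0 < x / w ∧ x / w < t) * xi *
        Real.exp (-(xi * (x / w))) / (w + lam * x))) = (Ioo (w * t) 0).indicator g := by
      funext x
      have hcond : (0 < x / w ∧ x / w < t) ↔ x ∈ Ioo (w * t) 0 := by
        rw [Set.mem_Ioo, lt_div_iff_of_neg hneg, div_lt_iff_of_neg hneg]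
        constructor
        · rintro ⟨h1, h2⟩; exact ⟨by linarith, by linarith⟩
        · rintro ⟨h1, h2⟩; exact ⟨by linarith, by linarith⟩
      rw [Set.indicator_apply]
      by_cases hx : x ∈ Ioo (w * t) 0
      · rw [if_pos hx, ind, if_pos (hcond.mpr hx), Real.sign_of_neg hneg, hg]; ring
      · rw [if_neg hx, ind, if_neg (fun h => hx (hcond.mp h))]; ring
    have hsub : w * t ≤ 0 := by nlinarith
    have hcontg : ContinuousOn g (Icc (w * t) 0) := by
      apply ContinuousOn.neg
      apply ContinuousOn.div
      · fun_prop
      · fun_prop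
      · intro x hx
        have : lam * x ≤ 0 := mul_nonpos_of_nonneg_of_nonpos hlam.le hx.2
        intro h0; nlinarith
    constructor
    · rw [hset]
      exact (MeasureTheory.integrable_indicator_iff measurableSet_Ioo).mpr
        ((hcontg.integrableOn_Icc).mono_set Set.Ioo_subset_Icc_self)
    rw [hset, MeasureTheory.integral_indicator measurableSet_Ioo,
      ← MeasureTheory.integral_Ioc_eq_integral_Ioo,
      ← intervalIntegral.integral_of_le hsub]
    have hsubst : ∫ x in (w*t)..(0:ℝ), g x = w • ∫ s in t..(0:ℝ), g (w * s) := by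
      have h := intervalIntegral.smul_integral_comp_mul_left (a := t) (b := (0:ℝ)) g w
      rw [mul_zero] at h; exact h.symm
    rw [hsubst, intervalIntegral.integral_symm]
    have hcong : Set.EqOn (fun s => g (w * s))
        (fun s => -(xi * s * Real.exp (-(xi * s)) / (1 + lam * s))) (Set.uIcc 0 t) := by
      intro s hs
      rw [Set.uIcc_of_le ht.le] at hs
      have hds : (1 + lam * s) ≠ 0 := by nlinarith [hs.1]
      simp only [hg]
      rw [mul_div_cancel_left₀ s hneg.ne]
      rw [show w + lam * (w * s) = w * (1 + lam * s) by ring]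
      rw [show w * s * xi * Real.exp (-(xi * s)) = w * (s * xi * Real.exp (-(xi * s))) by ring,
        mul_div_mul_left _ _ hneg.ne]
      ring
    rw [intervalIntegral.integral_congr hcong]
    simp only [intervalIntegral.integral_neg, neg_neg, smul_eq_mul]
  · -- 0 < w
    set g : ℝ → ℝ := fun x => x * xi * Real.exp (-(xi * (x / w))) / (w + lam * x) with hg
    have hset : (fun x : ℝ => x * (Real.sign w * ind (0 < x / w ∧ x / w < t) * xi *
        Real.exp (-(xi * (x / w))) / (w + lam * x))) = (Ioo 0 (w * t)).indicator g := by
      funext x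
      have hcond : (0 < x / w ∧ x / w < t) ↔ x ∈ Ioo 0 (w * t) := by
        rw [Set.mem_Ioo, lt_div_iff₀ hpos, div_lt_iff₀ hpos]
        constructor
        · rintro ⟨h1, h2⟩; exact ⟨by linarith, by linarith⟩
        · rintro ⟨h1, h2⟩; exact ⟨by linarith, by linarith⟩
      rw [Set.indicator_apply]
      by_cases hx : x ∈ Ioo 0 (w * t)
      · rw [if_pos hx, ind, if_pos (hcond.mpr hx), Real.sign_of_pos hpos, hg]; ring
      · rw [if_neg hx, ind, if_neg (fun h => hx (hcond.mp h))]; ring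
    have hsub : (0:ℝ) ≤ w * t := by positivity
    have hcontg : ContinuousOn g (Icc 0 (w * t)) := by
      apply ContinuousOn.div
      · fun_prop
      · fun_prop
      · intro x hx
        have : 0 ≤ lam * x := mul_nonneg hlam.le hx.1
        intro h0; nlinarith
    constructor
    · rw [hset]
      exact (MeasureTheory.integrable_indicator_iff measurableSet_Ioo).mpr
        ((hcontg.integrableOn_Icc).mono_set Set.Ioo_subset_Icc_self)
    rw [hset, MeasureTheory.integral_indicator measurableSet_Ioo,
      ← MeasureTheory.integral_Ioc_eq_integral_Ioo,
      ← intervalIntegral.integral_of_le hsub]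
    have hsubst : ∫ x in (0:ℝ)..(w*t), g x = w • ∫ s in (0:ℝ)..t, g (w * s) := by
      have h := intervalIntegral.smul_integral_comp_mul_left (a := (0:ℝ)) (b := t) g w
      rw [mul_zero] at h; exact h.symm
    rw [hsubst]
    have hcong : Set.EqOn (fun s => g (w * s))
        (fun s => xi * s * Real.exp (-(xi * s)) / (1 + lam * s)) (Set.uIcc (0:ℝ) t) := by
      intro s hs
      rw [Set.uIcc_of_le ht.le] at hs
      have hds : (1 + lam * s) ≠ 0 := by nlinarith [hs.1]
      simp only [hg]
      rw [mul_div_cancel_left₀ s hpos.ne']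
      rw [show w + lam * (w * s) = w * (1 + lam * s) by ring]
      rw [show w * s * xi * Real.exp (-(xi * s)) = w * (s * xi * Real.exp (-(xi * s))) by ring,
        mul_div_mul_left _ _ hpos.ne']
      ring
    rw [intervalIntegral.integral_congr hcong]
    simp only [smul_eq_mul]

/-- Term B -/
lemma termB (hlam : 0 < lam) (hxi : 0 < xi) (ht : 0 < t) (hv : v₂ < v₁) :
    Integrable (fun x : ℝ => x * (ind (v₂ * t < x ∧ x < v₁ * t) * lam *
        Real.exp (-(xi * t)) / ((v₁ - v₂) * (1 + lam * t)))) volume ∧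
      ∫ x : ℝ, x * (ind (v₂ * t < x ∧ x < v₁ * t) * lam *
        Real.exp (-(xi * t)) / ((v₁ - v₂) * (1 + lam * t)))
      = lam * Real.exp (-(xi * t)) * t ^ 2 * (v₁ + v₂) / (2 * (1 + lam * t)) := by
  set c : ℝ := lam * Real.exp (-(xi * t)) / ((v₁ - v₂) * (1 + lam * t)) with hc
  set g : ℝ → ℝ := fun x => x * c with hg
  have hset : (fun x : ℝ => x * (ind (v₂ * t < x ∧ x < v₁ * t) * lam *
      Real.exp (-(xi * t)) / ((v₁ - v₂) * (1 + lam * t)))) = (Ioo (v₂ * t) (v₁ * t)).indicator g := by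
    funext x
    rw [Set.indicator_apply]
    by_cases hx : x ∈ Ioo (v₂ * t) (v₁ * t)
    · rw [if_pos hx, ind, if_pos (Set.mem_Ioo.mp hx), hg, hc]; ring
    · rw [if_neg hx, ind, if_neg (fun h => hx (Set.mem_Ioo.mpr h))]; ring
  have hle : v₂ * t ≤ v₁ * t := by nlinarith
  constructor
  · rw [hset]
    exact (MeasureTheory.integrable_indicator_iff measurableSet_Ioo).mpr
      (((continuous_id.mul continuous_const).continuousOn.integrableOn_Icc).mono_set
        Set.Ioo_subset_Icc_self)
  rw [hset, MeasureTheory.integral_indicator measurableSet_Ioo,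
    ← MeasureTheory.integral_Ioc_eq_integral_Ioo, ← intervalIntegral.integral_of_le hle]
  rw [show g = fun x : ℝ => x * c from rfl]
  rw [intervalIntegral.integral_mul_const, integral_id]
  rw [hc]
  have h1 : v₁ - v₂ ≠ 0 := sub_ne_zero.mpr hv.ne'
  have h2 : (1 : ℝ) + lam * t ≠ 0 := by positivity
  field_simp
  ring

/-- substitution helper: `∫_0^{v t} x c Γ((x/v+1/λ)ξ, T) dx = v² c J`. -/
lemma subst_piece (hlam : 0 < lam) (hxi : 0 < xi) (ht : 0 < t) {v c : ℝ} (hv : v ≠ 0) :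
    ∫ x in (0:ℝ)..(v * t), x * c * iGamma ((x / v + 1 / lam) * xi) ((t + 1 / lam) * xi)
      = v ^ 2 * c * ∫ s in (0:ℝ)..t, s * iGamma ((s + 1 / lam) * xi) ((t + 1 / lam) * xi) := by
  set g : ℝ → ℝ := fun x => x * c * iGamma ((x / v + 1 / lam) * xi) ((t + 1 / lam) * xi) with hg
  have hsubst : ∫ x in (0:ℝ)..(v*t), g x = v • ∫ s in (0:ℝ)..t, g (v * s) := by
    have h := intervalIntegral.smul_integral_comp_mul_left (a := (0:ℝ)) (b := t) g v
    rw [mul_zero] at h; exact h.symm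
  rw [hsubst]
  have hfun : (fun s => g (v * s))
      = fun s => (v * c) * (s * iGamma ((s + 1 / lam) * xi) ((t + 1 / lam) * xi)) := by
    funext s
    simp only [hg]
    rw [mul_div_cancel_left₀ s hv]
    ring
  rw [hfun, intervalIntegral.integral_const_mul]
  simp only [smul_eq_mul]
  ring

/-- Term C, case v₂ < 0 < v₁ -/
lemma termC_neg (hlam : 0 < lam) (hxi : 0 < xi) (ht : 0 < t) (hv2 : v₂ < 0) (hv1 : 0 < v₁) :
    Integrable (fun x : ℝ => x * (ind (min (v₂ * t) 0 < x ∧ x < v₁ * t) *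
        (xi * Real.exp (xi / lam) / (v₁ - v₂)) * GamL v₁ v₂ lam xi x t)) volume ∧
      ∫ x : ℝ, x * (ind (min (v₂ * t) 0 < x ∧ x < v₁ * t) *
        (xi * Real.exp (xi / lam) / (v₁ - v₂)) * GamL v₁ v₂ lam xi x t)
      = xi * Real.exp (xi / lam) * (v₁ + v₂) *
          ∫ s in (0:ℝ)..t, s * iGamma ((s + 1 / lam) * xi) ((t + 1 / lam) * xi) := by
  have hv : v₂ < v₁ := hv2.trans hv1
  set c : ℝ := xi * Real.exp (xi / lam) / (v₁ - v₂) with hc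
  set T : ℝ := (t + 1 / lam) * xi with hT
  have hTpos : 0 < T := by rw [hT]; positivity
  have hmin : min (v₂ * t) 0 = v₂ * t := min_eq_left (by nlinarith)
  set g : ℝ → ℝ := fun x => x * c * iGamma ((max (x / v₁) (x / v₂) + 1 / lam) * xi) T with hg
  have hmpos : ∀ x : ℝ, 0 < (max (x / v₁) (x / v₂) + 1 / lam) * xi := by
    intro x
    have : 0 ≤ max (x / v₁) (x / v₂) := by
      rcases le_or_gt 0 x with hx | hx
      · exact le_trans (div_nonneg hx hv1.le) (le_max_left _ _)
      · exact le_trans (div_nonneg_of_nonpos hx.le hv2.le) (le_max_right _ _)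
    positivity
  have hcontg : Continuous g := by
    apply Continuous.mul (continuous_id.mul continuous_const)
    rw [continuous_iff_continuousAt]
    intro x
    exact ContinuousAt.comp (x := x)
      (f := fun x : ℝ => (max (x / v₁) (x / v₂) + 1 / lam) * xi)
      (continuousAt_iGamma_left T hTpos (hmpos x)) (by fun_prop)
  have hset : (fun x : ℝ => x * (ind (min (v₂ * t) 0 < x ∧ x < v₁ * t) *
      (xi * Real.exp (xi / lam) / (v₁ - v₂)) * GamL v₁ v₂ lam xi x t))
      = (Ioo (v₂ * t) (v₁ * t)).indicator g := by
    funext x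
    rw [hmin, Set.indicator_apply]
    by_cases hx : x ∈ Ioo (v₂ * t) (v₁ * t)
    · rw [if_pos hx, ind, if_pos (Set.mem_Ioo.mp hx), hg, GamL, if_pos hv2, ← hc, ← hT]; ring
    · rw [if_neg hx, ind, if_neg (fun h => hx (Set.mem_Ioo.mpr h))]; ring
  have hle2 : v₂ * t ≤ 0 := by nlinarith
  have hle1 : (0:ℝ) ≤ v₁ * t := by positivity
  constructor
  · rw [hset]
    exact (MeasureTheory.integrable_indicator_iff measurableSet_Ioo).mpr
      ((hcontg.continuousOn.integrableOn_Icc).mono_set Set.Ioo_subset_Icc_self)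
  rw [hset, MeasureTheory.integral_indicator measurableSet_Ioo,
    ← MeasureTheory.integral_Ioc_eq_integral_Ioo,
    ← intervalIntegral.integral_of_le (hle2.trans hle1)]
  rw [← intervalIntegral.integral_add_adjacent_intervals
    (hcontg.intervalIntegrable (v₂ * t) 0) (hcontg.intervalIntegrable 0 (v₁ * t))]
  have hpiece1 : ∫ x in (v₂ * t)..(0:ℝ), g x
      = - (v₂ ^ 2 * c * ∫ s in (0:ℝ)..t, s * iGamma ((s + 1 / lam) * xi) T) := by
    have hcong : Set.EqOn g
        (fun x => x * c * iGamma ((x / v₂ + 1 / lam) * xi) T) (Set.uIcc (v₂ * t) 0) := by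
      intro x hx
      rw [Set.uIcc_of_le hle2] at hx
      have hmax : max (x / v₁) (x / v₂) = x / v₂ := by
        apply max_eq_right
        exact le_trans (div_nonpos_of_nonpos_of_nonneg hx.2 hv1.le)
          (div_nonneg_of_nonpos hx.2 hv2.le)
      simp only [hg, hmax]
    rw [intervalIntegral.integral_congr hcong, intervalIntegral.integral_symm]
    rw [subst_piece hlam hxi ht hv2.ne]
  have hpiece2 : ∫ x in (0:ℝ)..(v₁ * t), g x
      = v₁ ^ 2 * c * ∫ s in (0:ℝ)..t, s * iGamma ((s + 1 / lam) * xi) T := by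
    have hcong : Set.EqOn g
        (fun x => x * c * iGamma ((x / v₁ + 1 / lam) * xi) T) (Set.uIcc 0 (v₁ * t)) := by
      intro x hx
      rw [Set.uIcc_of_le hle1] at hx
      have hmax : max (x / v₁) (x / v₂) = x / v₁ := by
        apply max_eq_left
        exact le_trans (div_nonpos_of_nonneg_of_nonpos hx.1 hv2.le)
          (div_nonneg hx.1 hv1.le)
      simp only [hg, hmax]
    rw [intervalIntegral.integral_congr hcong]
    rw [subst_piece hlam hxi ht hv1.ne']
  rw [hpiece1, hpiece2, hc]
  have h1 : v₁ - v₂ ≠ 0 := sub_ne_zero.mpr hv.ne'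
  field_simp
  ring

/-- Term C, case 0 < v₂ < v₁ -/
lemma termC_pos (hlam : 0 < lam) (hxi : 0 < xi) (ht : 0 < t) (hv2 : 0 < v₂) (hv : v₂ < v₁) :
    Integrable (fun x : ℝ => x * (ind (min (v₂ * t) 0 < x ∧ x < v₁ * t) *
        (xi * Real.exp (xi / lam) / (v₁ - v₂)) * GamL v₁ v₂ lam xi x t)) volume ∧
      ∫ x : ℝ, x * (ind (min (v₂ * t) 0 < x ∧ x < v₁ * t) *
        (xi * Real.exp (xi / lam) / (v₁ - v₂)) * GamL v₁ v₂ lam xi x t)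
      = xi * Real.exp (xi / lam) * (v₁ + v₂) *
          ∫ s in (0:ℝ)..t, s * iGamma ((s + 1 / lam) * xi) ((t + 1 / lam) * xi) := by
  have hv1 : 0 < v₁ := hv2.trans hv
  set c : ℝ := xi * Real.exp (xi / lam) / (v₁ - v₂) with hc
  set T : ℝ := (t + 1 / lam) * xi with hT
  have hTpos : 0 < T := by rw [hT]; positivity
  have hmin : min (v₂ * t) 0 = 0 := min_eq_right (by positivity)
  set g : ℝ → ℝ := fun x => x * c * iGamma ((x / v₁ + 1 / lam) * xi)
    ((min (x / v₂) t + 1 / lam) * xi) with hg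
  set g₁ : ℝ → ℝ := fun x => x * c * iGamma ((x / v₁ + 1 / lam) * xi) T with hg1
  set g₂ : ℝ → ℝ := fun x => x * c * iGamma ((min (x / v₂) t + 1 / lam) * xi) T with hg2
  have hnn : ∀ x : ℝ, 0 ≤ x → 0 < (x / v₁ + 1 / lam) * xi ∧
      0 < (min (x / v₂) t + 1 / lam) * xi := by
    intro x hx
    have h1 : 0 ≤ x / v₁ := div_nonneg hx hv1.le
    have h2 : 0 ≤ min (x / v₂) t := le_min (div_nonneg hx hv2.le) ht.le
    constructor <;> positivity
  have hgsplit : Set.EqOn g (fun x => g₁ x - g₂ x) (Icc 0 (v₁ * t)) := by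
    intro x hx
    obtain ⟨h1, h2⟩ := hnn x hx.1
    simp only [hg, hg1, hg2]
    rw [iGamma_split h1 h2 hTpos]
    ring
  have hcont1 : ContinuousOn g₁ (Icc 0 (v₁ * t)) := by
    apply ContinuousOn.mul (continuous_id.mul continuous_const).continuousOn
    exact contOn_iGamma_comp hTpos (by fun_prop) (fun x hx => (hnn x hx.1).1)
  have hcont2 : ContinuousOn g₂ (Icc 0 (v₁ * t)) := by
    apply ContinuousOn.mul (continuous_id.mul continuous_const).continuousOn
    apply contOn_iGamma_comp hTpos
    · apply ContinuousOn.mul _ continuousOn_const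
      apply ContinuousOn.add _ continuousOn_const
      exact ((continuous_id.div_const v₂).min continuous_const).continuousOn
    · exact fun x hx => (hnn x hx.1).2
  have hcontg : ContinuousOn g (Icc 0 (v₁ * t)) :=
    ContinuousOn.congr (hcont1.sub hcont2) hgsplit
  have hset : (fun x : ℝ => x * (ind (min (v₂ * t) 0 < x ∧ x < v₁ * t) *
      (xi * Real.exp (xi / lam) / (v₁ - v₂)) * GamL v₁ v₂ lam xi x t))
      = (Ioo 0 (v₁ * t)).indicator g := by
    funext x
    rw [hmin, Set.indicator_apply]
    by_cases hx : x ∈ Ioo 0 (v₁ * t)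
    · rw [if_pos hx, ind, if_pos (Set.mem_Ioo.mp hx), hg, GamL,
        if_neg (not_lt.mpr hv2.le), ← hc]; ring
    · rw [if_neg hx, ind, if_neg (fun h => hx (Set.mem_Ioo.mpr h))]; ring
  have hle1 : (0:ℝ) ≤ v₁ * t := by positivity
  have hle2 : (0:ℝ) ≤ v₂ * t := by positivity
  have hle3 : v₂ * t ≤ v₁ * t := by nlinarith
  constructor
  · rw [hset]
    exact (MeasureTheory.integrable_indicator_iff measurableSet_Ioo).mpr
      ((hcontg.integrableOn_Icc).mono_set Set.Ioo_subset_Icc_self)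
  rw [hset, MeasureTheory.integral_indicator measurableSet_Ioo,
    ← MeasureTheory.integral_Ioc_eq_integral_Ioo,
    ← intervalIntegral.integral_of_le hle1]
  have hIcc : Set.uIcc (0:ℝ) (v₁ * t) = Icc 0 (v₁ * t) := Set.uIcc_of_le hle1
  rw [intervalIntegral.integral_congr (by rw [hIcc]; exact hgsplit)]
  rw [intervalIntegral.integral_sub
    (hcont1.mono (by rw [hIcc]) |>.intervalIntegrable)
    (hcont2.mono (by rw [hIcc]) |>.intervalIntegrable)]
  have hp1 : ∫ x in (0:ℝ)..(v₁ * t), g₁ x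
      = v₁ ^ 2 * c * ∫ s in (0:ℝ)..t, s * iGamma ((s + 1 / lam) * xi) T := by
    rw [hg1, subst_piece hlam hxi ht hv1.ne']
  have hp2 : ∫ x in (0:ℝ)..(v₁ * t), g₂ x
      = v₂ ^ 2 * c * ∫ s in (0:ℝ)..t, s * iGamma ((s + 1 / lam) * xi) T := by
    have hsub1 : Set.uIcc (0:ℝ) (v₂ * t) ⊆ Icc 0 (v₁ * t) := by
      rw [Set.uIcc_of_le hle2]; exact Set.Icc_subset_Icc le_rfl hle3
    have hsub2 : Set.uIcc (v₂ * t) (v₁ * t) ⊆ Icc 0 (v₁ * t) := by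
      rw [Set.uIcc_of_le hle3]; exact Set.Icc_subset_Icc hle2 le_rfl
    have hi1 : IntervalIntegrable g₂ volume 0 (v₂ * t) :=
      (hcont2.mono hsub1).intervalIntegrable
    have hi2 : IntervalIntegrable g₂ volume (v₂ * t) (v₁ * t) :=
      (hcont2.mono hsub2).intervalIntegrable
    rw [← intervalIntegral.integral_add_adjacent_intervals hi1 hi2]
    have hz : ∫ x in (v₂ * t)..(v₁ * t), g₂ x = 0 := by
      rw [intervalIntegral.integral_congr (g := fun _ => (0:ℝ))
        (by
          intro x hx
          rw [Set.uIcc_of_le hle3] at hx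
          have : x / v₂ ≥ t := (le_div_iff₀ hv2).mpr (by nlinarith [hx.1])
          simp only [hg2, min_eq_right this, ← hT, iGamma_same, mul_zero])]
      simp
    have hfirst : ∫ x in (0:ℝ)..(v₂ * t), g₂ x
        = v₂ ^ 2 * c * ∫ s in (0:ℝ)..t, s * iGamma ((s + 1 / lam) * xi) T := by
      rw [intervalIntegral.integral_congr
        (g := fun x => x * c * iGamma ((x / v₂ + 1 / lam) * xi) T)
        (by
          intro x hx
          rw [Set.uIcc_of_le hle2] at hx
          have : x / v₂ ≤ t := (div_le_iff₀ hv2).mpr (by nlinarith [hx.2])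
          simp only [hg2, min_eq_left this])]
      rw [subst_piece hlam hxi ht hv2.ne']
    rw [hz, hfirst]; ring
  rw [hp1, hp2, hc]
  have h1 : v₁ - v₂ ≠ 0 := sub_ne_zero.mpr hv.ne'
  field_simp
  ring

end Helpers

/-- Theorem 5.2, Eq. (54): the mean position of the reset telegraph process. -/
theorem first_moment (v₁ v₂ lam xi : ℝ) (hlam : 0 < lam) (hxi : 0 < xi)
    (hv : v₂ < v₁) (hv1 : v₁ ≠ 0) (hv2 : v₂ ≠ 0)
    (hcase : (v₂ < 0 ∧ 0 < v₁) ∨ (0 < v₂ ∧ v₂ < v₁)) :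
    ∀ j : ℕ, (j = 1 ∨ j = 2) → ∀ t : ℝ, 0 < t →
      vel v₁ v₂ j * t * Real.exp (-(xi * t)) / (1 + lam * t)
        + ∫ x : ℝ, x * pTil v₁ v₂ lam xi j x t
      = Emom v₁ v₂ lam xi j t := by
  intro j hj t ht
  have hw : vel v₁ v₂ j ≠ 0 := by
    rcases hj with h | h <;> subst h <;> simp [vel] <;> assumption
  have hA := termA (lam := lam) (xi := xi) hlam hxi ht hw
  have hB := termB (v₁ := v₁) (v₂ := v₂) hlam hxi ht hv
  have hC : Integrable (fun x : ℝ => x * (ind (min (v₂ * t) 0 < x ∧ x < v₁ * t) *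
        (xi * Real.exp (xi / lam) / (v₁ - v₂)) * GamL v₁ v₂ lam xi x t)) volume ∧
      ∫ x : ℝ, x * (ind (min (v₂ * t) 0 < x ∧ x < v₁ * t) *
        (xi * Real.exp (xi / lam) / (v₁ - v₂)) * GamL v₁ v₂ lam xi x t)
      = xi * Real.exp (xi / lam) * (v₁ + v₂) *
          ∫ s in (0:ℝ)..t, s * iGamma ((s + 1 / lam) * xi) ((t + 1 / lam) * xi) := by
    rcases hcase with ⟨h2, h1⟩ | ⟨h2, h3⟩
    · exact termC_neg hlam hxi ht h2 h1
    · exact termC_pos hlam hxi ht h2 h3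
  have hfun : (fun x : ℝ => x * pTil v₁ v₂ lam xi j x t)
      = fun x : ℝ =>
        (x * (Real.sign (vel v₁ v₂ j) * ind (0 < x / vel v₁ v₂ j ∧ x / vel v₁ v₂ j < t) * xi *
          Real.exp (-(xi * (x / vel v₁ v₂ j))) / (vel v₁ v₂ j + lam * x)))
        + ((x * (ind (v₂ * t < x ∧ x < v₁ * t) * lam * Real.exp (-(xi * t)) /
            ((v₁ - v₂) * (1 + lam * t))))
          + (x * (ind (min (v₂ * t) 0 < x ∧ x < v₁ * t) *
              (xi * Real.exp (xi / lam) / (v₁ - v₂)) * GamL v₁ v₂ lam xi x t))) := by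
    funext x
    simp only [pTil]
    ring
  have hBC : Integrable (fun x : ℝ =>
      (x * (ind (v₂ * t < x ∧ x < v₁ * t) * lam * Real.exp (-(xi * t)) /
        ((v₁ - v₂) * (1 + lam * t))))
      + (x * (ind (min (v₂ * t) 0 < x ∧ x < v₁ * t) *
          (xi * Real.exp (xi / lam) / (v₁ - v₂)) * GamL v₁ v₂ lam xi x t))) volume := by
    exact hB.1.add hC.1
  rw [hfun, MeasureTheory.integral_add hA.1 hBC]
  rw [MeasureTheory.integral_add hB.1 hC.1, hA.2, hB.2, hC.2,
    K_int hlam hxi ht, J_int hlam hxi ht]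
  have hden : (1 : ℝ) + lam * t ≠ 0 := by positivity
  have hE : Real.exp (-(xi / lam)) = (Real.exp (xi / lam))⁻¹ := Real.exp_neg _
  rw [hE]
  have hE0 : Real.exp (xi / lam) ≠ 0 := (Real.exp_pos _).ne'
  rcases hj with h | h <;> subst h <;>
    simp only [Emom, vel, show (3:ℕ) - 1 = 2 from rfl, show (3:ℕ) - 2 = 1 from rfl] <;>
    norm_num <;>
    field_simp <;>
    ring

end TelegraphReset
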